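/- Let θ ∈ ℤ_p be neither zero nor a negative rational integer, and let θ' ∈ ℚ ∩ ℤ_p be the unique element such that pθ'−θ is an integer in [0, p−1]. Let μ and s be positive integers, m a nonnegative integer, and a an integer with 0 ≤ a ≤ p−1. Let ρ(x) := 1 if x > 0 and ρ(x) := 0 if x ≤ 0. Then there exists u ∈ 1 + [p^{s+1}]_q·R such that, in Q, C_θ(a+μp+mp^{s+1})/φ(C_{θ'}(μ+mp^s)) = u · (C_θ(mp^{s+1})/φ(C_{θ'}(mp^s))) · (C_θ(a+μp)/φ(C_{θ'}(μ))) · (φ(1 + q^{θ'+μ}·[mp^s]_q/[θ'+μ]_q))^{ρ(a+θ−pθ')}. (All q-numbers appearing are nonzero, since θ and θ' are not nonpositive integers.) -/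

import Mathlib

/- Setting (following Dwork-type q-congruences / q-hypergeometric papers):
`p` is an odd prime, `R = ℤ_p[[q−1]]` is implemented as `PowerSeries ℤ_[p]`, the power-series
variable `PowerSeries.X` standing for `q − 1`. -/

noncomputable section
open PowerSeries
namespace QDwork

variable (p : ℕ) [Fact p.Prime]

/-- `R = ℤ_p[[q−1]]`. -/
abbrev R : Type := PowerSeries ℤ_[p]

/-- `q = 1 + (q−1) ∈ R`. -/
def qq : R p := 1 + PowerSeries.X

/-- `q^a = Σ_{i≥0} binom(a,i)(q−1)^i ∈ R` for `a ∈ ℤ_p`, using the p-adically interpolated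
binomial coefficients `Ring.choose` (`ℤ_p` is a binomial ring). -/
def qpow (a : ℤ_[p]) : R p := PowerSeries.mk fun i => Ring.choose a i

/-- The q-number `[a]_q = (q^a−1)/(q−1) = Σ_{i≥1} binom(a,i)(q−1)^{i−1} ∈ R` for `a ∈ ℤ_p`. -/
def qnum (a : ℤ_[p]) : R p := PowerSeries.mk fun i => Ring.choose a (i + 1)

/-- The q-number `[n]_q = 1 + q + ⋯ + q^{n−1} ∈ R` of a natural number `n`. -/
def qnat (n : ℕ) : R p := ∑ i ∈ Finset.range n, qq p ^ i

/-- The Frobenius endomorphism `φ` of `R = ℤ_p[[q−1]]`: the ring endomorphism fixing `ℤ_p`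
with `φ(q) = q^p`, i.e. the substitution `f(q−1) ↦ f(q^p−1)` (legitimate since `q^p−1` has
zero constant term), described here through its coefficients. -/
def phiR (f : R p) : R p :=
  PowerSeries.mk fun n => ∑ i ∈ Finset.range (n + 1),
    PowerSeries.coeff (R := ℤ_[p]) i f * PowerSeries.coeff (R := ℤ_[p]) n ((qq p ^ p - 1) ^ i)

/-- `Q = Frac(R)`. -/
abbrev Q : Type := FractionRing (R p)

/-- The canonical injection `R → Q`. -/
def ι : R p →+* Q p := algebraMap (R p) (Q p)

/-- `q ∈ Q`. -/
def qQ : Q p := ι p (qq p)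

/-- The extension of the Frobenius `φ` to `Q = Frac(R)` (computed via a choice of a fraction
representation `x = r/s`, `φ(x) = φ(r)/φ(s)`). -/
def phiQ (x : Q p) : Q p :=
  ι p (phiR p (IsLocalization.sec (nonZeroDivisors (R p)) x).1) /
    ι p (phiR p ((IsLocalization.sec (nonZeroDivisors (R p)) x).2 : R p))

/-- `[a]_q` viewed in `Q`, for `a ∈ ℤ_p`. -/
def qnumQ (a : ℤ_[p]) : Q p := ι p (qnum p a)

/-- `[n]_q` viewed in `Q`, for a natural number `n`. -/
def qnatQ (n : ℕ) : Q p := ι p (qnat p n)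

/-- `C_θ(n) = ∏_{ν=0}^{n−1} [θ+ν]_q ∈ R`. -/
def Cq (θ : ℤ_[p]) (n : ℕ) : R p := ∏ ν ∈ Finset.range n, qnum p (θ + (ν : ℤ_[p]))

@[simp] lemma coeff_qpow (a : ℤ_[p]) (n : ℕ) : coeff (R := ℤ_[p]) n (qpow p a) = Ring.choose a n := by
  simp [qpow]

@[simp] lemma coeff_qnum (a : ℤ_[p]) (n : ℕ) : coeff (R := ℤ_[p]) n (qnum p a) = Ring.choose a (n+1) := by
  simp [qnum]

lemma qpow_add (a b : ℤ_[p]) : qpow p (a + b) = qpow p a * qpow p b := by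
  ext n
  rw [coeff_mul, coeff_qpow, Ring.add_choose_eq n (Commute.all a b)]
  simp

@[simp] lemma qpow_zero : qpow p 0 = 1 := by
  ext n
  have h0 : (0 : ℤ_[p]) = ((0:ℕ) : ℤ_[p]) := by norm_num
  rw [coeff_qpow, h0, Ring.choose_natCast, PowerSeries.coeff_one]
  rcases n with _ | n <;> simp

@[simp] lemma qpow_one : qpow p 1 = qq p := by
  ext n
  have : ((1:ℕ) : ℤ_[p]) = 1 := by norm_num
  rw [← this]
  simp only [coeff_qpow, Ring.choose_natCast, qq]
  rcases n with _ | n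
  · simp
  · rcases n with _ | n <;> simp [Nat.choose, PowerSeries.coeff_one, PowerSeries.coeff_X]

lemma qpow_natCast (k : ℕ) : qpow p (k : ℤ_[p]) = qq p ^ k := by
  induction k with
  | zero => simp
  | succ n ih => rw [Nat.cast_succ, qpow_add, ih, qpow_one, pow_succ]

lemma X_mul_qnum (a : ℤ_[p]) : X * qnum p a = qpow p a - 1 := by
  ext n
  rcases n with _ | n
  · simp [Ring.choose_zero_right, PowerSeries.coeff_zero_eq_constantCoeff, qpow,
      PowerSeries.constantCoeff_mk]
  · simp [coeff_succ_X_mul, PowerSeries.coeff_one]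

lemma X_ne_zero' : (X : R p) ≠ 0 := by
  intro h
  have := congrArg (coeff (R := ℤ_[p]) 1) h
  simp [PowerSeries.coeff_X] at this

lemma qnum_add (a b : ℤ_[p]) : qnum p (a + b) = qnum p a + qpow p a * qnum p b := by
  apply mul_left_cancel₀ (X_ne_zero' p)
  rw [mul_add, X_mul_qnum, qpow_add, mul_left_comm, X_mul_qnum, X_mul_qnum]
  ring

@[simp] lemma qnum_zero : qnum p 0 = 0 := by
  ext n
  have h0 : (0 : ℤ_[p]) = ((0:ℕ) : ℤ_[p]) := by norm_num
  rw [coeff_qnum, h0, Ring.choose_natCast]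
  simp

@[simp] lemma qnum_one : qnum p 1 = 1 := by
  ext n
  have : ((1:ℕ) : ℤ_[p]) = 1 := by norm_num
  rw [← this]
  simp only [coeff_qnum, Ring.choose_natCast, PowerSeries.coeff_one]
  rcases n with _ | n <;> simp [Nat.choose]

lemma qnat_succ (n : ℕ) : qnat p (n+1) = qnat p n + qq p ^ n := by
  simp [qnat, Finset.sum_range_succ]

lemma qnum_natCast (k : ℕ) : qnum p (k : ℤ_[p]) = qnat p k := by
  induction k with
  | zero => simp [qnat]
  | succ n ih => rw [Nat.cast_succ, qnum_add, ih, qnum_one, qnat_succ, qpow_natCast, mul_one]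

@[simp] lemma constantCoeff_qnum (a : ℤ_[p]) : constantCoeff (R := ℤ_[p]) (qnum p a) = a := by
  rw [← PowerSeries.coeff_zero_eq_constantCoeff_apply, coeff_qnum, zero_add,
    Ring.choose_one_right]

lemma qnum_ne_zero {a : ℤ_[p]} (ha : a ≠ 0) : qnum p a ≠ 0 := by
  intro h
  apply ha
  have := congrArg (constantCoeff (R := ℤ_[p])) h
  simpa using this

lemma isUnit_qnum {a : ℤ_[p]} (ha : IsUnit a) : IsUnit (qnum p a) := by
  rw [PowerSeries.isUnit_iff_constantCoeff, constantCoeff_qnum]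
  exact ha

lemma qnat_add (m n : ℕ) : qnat p (m + n) = qnat p m + qq p ^ m * qnat p n := by
  induction n with
  | zero => simp [qnat]
  | succ k ih => rw [← Nat.add_assoc, qnat_succ, ih, qnat_succ, mul_add, pow_add]; ring

lemma qnat_dvd (k l : ℕ) : qnat p k ∣ qnat p (k * l) := by
  induction l with
  | zero => simp [qnat]
  | succ n ih =>
      rw [Nat.mul_succ, qnat_add]
      exact dvd_add ih (Dvd.dvd.mul_left dvd_rfl _)

lemma X_mul_qnat (n : ℕ) : X * qnat p n = qq p ^ n - 1 := by
  rw [← qnum_natCast, X_mul_qnum, qpow_natCast]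

lemma coeff_pow_lt {i n : ℕ} (h : n < i) : coeff (R := ℤ_[p]) n ((qq p ^ p - 1) ^ i) = 0 := by
  have hdvd : (X : R p) ^ i ∣ (qq p ^ p - 1) ^ i :=
    pow_dvd_pow_of_dvd ⟨qnat p p, (X_mul_qnat p p).symm⟩ i
  exact PowerSeries.X_pow_dvd_iff.mp hdvd n h

lemma coeff_phiR (f : R p) (n : ℕ) :
    coeff (R := ℤ_[p]) n (phiR p f) = ∑ i ∈ Finset.range (n + 1),
      coeff (R := ℤ_[p]) i f * coeff (R := ℤ_[p]) n ((qq p ^ p - 1) ^ i) := by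
  simp [phiR]

lemma coeff_phiR_eval (P : Polynomial ℤ_[p]) (n : ℕ) :
    coeff (R := ℤ_[p]) n (Polynomial.eval₂ (PowerSeries.C (R := ℤ_[p])) (qq p ^ p - 1) P) =
      ∑ i ∈ Finset.range (n + 1), P.coeff i * coeff (R := ℤ_[p]) n ((qq p ^ p - 1) ^ i) := by
  classical
  rw [Polynomial.eval₂_eq_sum_range, map_sum]
  have h1 : ∀ i ∈ Finset.range (P.natDegree + 1),
      coeff (R := ℤ_[p]) n (PowerSeries.C (R := ℤ_[p]) (P.coeff i) * (qq p ^ p - 1) ^ i) =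
        P.coeff i * coeff (R := ℤ_[p]) n ((qq p ^ p - 1) ^ i) := by
    intro i _; rw [PowerSeries.coeff_C_mul]
  rw [Finset.sum_congr rfl h1]
  set M := max (P.natDegree + 1) (n + 1) with hM
  rw [Finset.sum_subset (Finset.range_subset_range.mpr (le_max_left _ _ : P.natDegree + 1 ≤ M)),
    ← Finset.sum_subset (Finset.range_subset_range.mpr (le_max_right _ _ : n + 1 ≤ M))]
  · intro i _ hi
    have hni : n < i := by
      rcases Nat.lt_or_ge i (n+1) with h | h
      · exact absurd (Finset.mem_range.mpr h) hi
      · omega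
    rw [coeff_pow_lt p hni, mul_zero]
  · intro i _ hi
    have hdi : P.natDegree < i := by
      rcases Nat.lt_or_ge i (P.natDegree+1) with h | h
      · exact absurd (Finset.mem_range.mpr h) hi
      · omega
    rw [Polynomial.coeff_eq_zero_of_natDegree_lt hdi, zero_mul]

lemma coeff_eval₂_trunc_eq_phiR (f : R p) {i M : ℕ} (h : i < M) :
    coeff (R := ℤ_[p]) i (Polynomial.eval₂ (PowerSeries.C (R := ℤ_[p])) (qq p ^ p - 1) (trunc M f)) =
      coeff (R := ℤ_[p]) i (phiR p f) := by
  rw [coeff_phiR_eval, coeff_phiR]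
  refine Finset.sum_congr rfl fun j hj => ?_
  rw [coeff_trunc, if_pos (lt_of_lt_of_le (Finset.mem_range.mp hj) (Nat.succ_le_of_lt h))]

lemma phiR_add (f g : R p) : phiR p (f + g) = phiR p f + phiR p g := by
  ext n
  simp [coeff_phiR, add_mul, Finset.sum_add_distrib]

lemma phiR_one : phiR p 1 = 1 := by
  ext n
  rw [coeff_phiR, Finset.sum_eq_single 0]
  · simp
  · intro b _ hb; simp [PowerSeries.coeff_one, hb]
  · intro h; simp at h

lemma phiR_mul (f g : R p) : phiR p (f * g) = phiR p f * phiR p g := by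
  ext n
  have h1 : coeff (R := ℤ_[p]) n (phiR p (f * g)) = coeff (R := ℤ_[p]) n
      (Polynomial.eval₂ (PowerSeries.C (R := ℤ_[p])) (qq p ^ p - 1)
        (trunc (n+1) f * trunc (n+1) g)) := by
    rw [coeff_phiR, coeff_phiR_eval]
    refine Finset.sum_congr rfl fun i hi => ?_
    have hi' : i ≤ n := Nat.lt_succ_iff.mp (Finset.mem_range.mp hi)
    congr 1
    rw [Polynomial.coeff_mul, PowerSeries.coeff_mul]
    refine Finset.sum_congr rfl fun ab hab => ?_
    have h1 : ab.1 ≤ i := Finset.HasAntidiagonal.antidiagonal.fst_le hab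
    have h2 : ab.2 ≤ i := Finset.HasAntidiagonal.antidiagonal.snd_le hab
    rw [coeff_trunc, coeff_trunc, if_pos (Nat.lt_succ_of_le (h1.trans hi')),
      if_pos (Nat.lt_succ_of_le (h2.trans hi'))]
  rw [h1, Polynomial.eval₂_mul, PowerSeries.coeff_mul, PowerSeries.coeff_mul]
  refine Finset.sum_congr rfl fun ab hab => ?_
  have h1 : ab.1 ≤ n := Finset.HasAntidiagonal.antidiagonal.fst_le hab
  have h2 : ab.2 ≤ n := Finset.HasAntidiagonal.antidiagonal.snd_le hab
  rw [coeff_eval₂_trunc_eq_phiR p f (Nat.lt_succ_of_le h1),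
    coeff_eval₂_trunc_eq_phiR p g (Nat.lt_succ_of_le h2)]

def phiHom : R p →+* R p where
  toFun := phiR p
  map_one' := phiR_one p
  map_mul' := phiR_mul p
  map_zero' := by ext n; simp [coeff_phiR]
  map_add' := phiR_add p

lemma phiHom_apply (f : R p) : phiHom p f = phiR p f := rfl

lemma phiR_X : phiR p X = qq p ^ p - 1 := by
  ext n
  rw [coeff_phiR]
  rcases n with _ | n
  · rw [Finset.sum_eq_single 0] <;>
      simp [PowerSeries.coeff_X, PowerSeries.coeff_zero_eq_constantCoeff, qq]
  · rw [Finset.sum_eq_single 1]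
    · simp [PowerSeries.coeff_X]
    · intro b _ hb
      simp [PowerSeries.coeff_X, hb]
    · intro h
      exfalso; exact h (Finset.mem_range.mpr (by omega))

lemma phiR_qq : phiR p (qq p) = qq p ^ p := by
  nth_rewrite 1 [show qq p = 1 + X from rfl]
  rw [phiR_add, phiR_one, phiR_X]; ring

lemma phiR_ne_zero {f : R p} (hf : f ≠ 0) : phiR p f ≠ 0 := by
  classical
  have hex : ∃ n, coeff (R := ℤ_[p]) n f ≠ 0 := by
    by_contra h; push_neg at h; exact hf (PowerSeries.ext fun n => by simp [h n])
  set n := Nat.find hex with hn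
  have hns : coeff (R := ℤ_[p]) n f ≠ 0 := Nat.find_spec hex
  have hlt : ∀ m < n, coeff (R := ℤ_[p]) m f = 0 := fun m hm => not_not.mp (Nat.find_min hex hm)
  intro h0
  have hcoeff : coeff (R := ℤ_[p]) n (phiR p f) = coeff (R := ℤ_[p]) n f * (p : ℤ_[p]) ^ n := by
    rw [coeff_phiR, Finset.sum_eq_single n]
    · congr 1
      rw [← X_mul_qnat p p, mul_pow]
      have := PowerSeries.coeff_X_pow_mul ((qnat p p : R p) ^ n) n 0
      rw [zero_add] at this
      rw [this, PowerSeries.coeff_zero_eq_constantCoeff, map_pow]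
      have hq : constantCoeff (R := ℤ_[p]) (qnat p p) = (p : ℤ_[p]) := by
        simp [qnat, qq]
      rw [hq]
    · intro b hb hbn
      rw [hlt b (lt_of_le_of_ne (Nat.lt_succ_iff.mp (Finset.mem_range.mp hb)) hbn), zero_mul]
    · intro h; exact absurd (Finset.self_mem_range_succ n) h
  rw [h0] at hcoeff
  simp only [map_zero] at hcoeff
  have hp0 : (p : ℤ_[p]) ^ n ≠ 0 := pow_ne_zero _ (by
    exact_mod_cast Nat.cast_ne_zero.mpr (Nat.Prime.ne_zero Fact.out))
  exact hns (by
    rcases mul_eq_zero.mp hcoeff.symm with h | h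
    · exact h
    · exact absurd h hp0)

lemma phiR_injective : Function.Injective (phiR p) := by
  intro f g hfg
  by_contra hne
  exact phiR_ne_zero p (sub_ne_zero.mpr hne) (by
    rw [← phiHom_apply, map_sub, phiHom_apply, phiHom_apply, hfg, sub_self])

lemma phiR_qpow (a : ℤ_[p]) : phiR p (qpow p a) = qpow p ((p : ℤ_[p]) * a) := by
  ext n
  have key : (fun a : ℤ_[p] => coeff (R := ℤ_[p]) n (phiR p (qpow p a))) =
      fun a : ℤ_[p] => coeff (R := ℤ_[p]) n (qpow p ((p : ℤ_[p]) * a)) := by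
    refine DenseRange.equalizer PadicInt.denseRange_natCast ?_ ?_ ?_
    · simp only [coeff_phiR, coeff_qpow]
      exact continuous_finset_sum _ fun i _ => (PadicInt.continuous_choose i).mul continuous_const
    · simp only [coeff_qpow]
      exact (PadicInt.continuous_choose n).comp (continuous_const.mul continuous_id)
    · funext k
      simp only [Function.comp_apply]
      have h1 : (p : ℤ_[p]) * (k : ℤ_[p]) = ((p * k : ℕ) : ℤ_[p]) := by push_cast; ring
      rw [qpow_natCast, h1, qpow_natCast, ← phiHom_apply, map_pow, phiHom_apply, phiR_qq,
        ← pow_mul]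
  exact congrFun key a

lemma qnum_p_mul (a : ℤ_[p]) :
    qnum p ((p : ℤ_[p]) * a) = qnat p p * phiR p (qnum p a) := by
  apply mul_left_cancel₀ (X_ne_zero' p)
  rw [X_mul_qnum, ← mul_assoc, X_mul_qnat, ← phiR_X, ← phiHom_apply, ← phiHom_apply,
    ← map_mul, phiHom_apply, X_mul_qnum, ← phiHom_apply, map_sub, map_one, phiHom_apply,
    phiR_qpow]
lemma iota_injective : Function.Injective (ι p) :=
  IsFractionRing.injective (R p) (Q p)

lemma iota_ne_zero {x : R p} (hx : x ≠ 0) : ι p x ≠ 0 := by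
  intro h
  exact hx (iota_injective p (by rw [h, map_zero]))

lemma phiQ_div (x y : R p) (hy : y ≠ 0) :
    phiQ p (ι p x / ι p y) = ι p (phiR p x) / ι p (phiR p y) := by
  set z := ι p x / ι p y with hz
  set r := (IsLocalization.sec (nonZeroDivisors (R p)) z).1 with hr
  set s := (IsLocalization.sec (nonZeroDivisors (R p)) z).2 with hs
  have hspec : z * ι p (s : R p) = ι p r := IsLocalization.sec_spec (nonZeroDivisors (R p)) z
  have hsne : (s : R p) ≠ 0 := nonZeroDivisors.coe_ne_zero s
  have hyQ : ι p y ≠ 0 := iota_ne_zero p hy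
  have hcross : x * (s : R p) = r * y := by
    apply iota_injective p
    rw [map_mul, map_mul]
    rw [hz, div_mul_eq_mul_div, div_eq_iff hyQ] at hspec
    exact hspec
  have hcross2 : phiR p x * phiR p (s : R p) = phiR p r * phiR p y := by
    rw [← phiR_mul, ← phiR_mul, hcross]
  have hφs : ι p (phiR p (s : R p)) ≠ 0 := iota_ne_zero p (phiR_ne_zero p hsne)
  have hφy : ι p (phiR p y) ≠ 0 := iota_ne_zero p (phiR_ne_zero p hy)
  rw [phiQ, ← hr, ← hs, div_eq_div_iff hφs hφy]
  rw [← map_mul, ← map_mul, hcross2.symm, mul_comm (phiR p x)]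

lemma Cq_ne_zero (θ : ℤ_[p]) (hθ : ∀ n : ℕ, θ + (n : ℤ_[p]) ≠ 0) (n : ℕ) : Cq p θ n ≠ 0 := by
  rw [Cq, Finset.prod_ne_zero_iff]
  exact fun ν _ => qnum_ne_zero p (hθ ν)

lemma prod_one_add (c : R p) (S : Finset ℕ) (f : ℕ → R p)
    (h : ∀ ν ∈ S, ∃ r, f ν = 1 + c * r) : ∃ r, ∏ ν ∈ S, f ν = 1 + c * r := by
  classical
  induction S using Finset.induction with
  | empty => exact ⟨0, by simp⟩
  | @insert x S hx ih =>
      obtain ⟨r1, hr1⟩ := h _ (Finset.mem_insert_self _ _)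
      obtain ⟨r2, hr2⟩ := ih (fun ν hν => h ν (Finset.mem_insert_of_mem hν))
      rw [Finset.prod_insert hx, hr1, hr2]
      exact ⟨r1 + r2 + c * r1 * r2, by ring⟩

lemma qnum_shift_unit (x : ℤ_[p]) (hu : IsUnit x) (s' m : ℕ) :
    ∃ r : R p, qnum p (x + ((m * p ^ (s' + 1) : ℕ) : ℤ_[p]))
      = qnum p x * (1 + qnat p (p ^ (s' + 1)) * r) := by
  obtain ⟨w, hw⟩ : qnat p (p ^ (s' + 1)) ∣ qnat p (m * p ^ (s' + 1)) := by
    rw [mul_comm m]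
    exact qnat_dvd p _ m
  have hu' : IsUnit (qnum p x) := isUnit_qnum p hu
  obtain ⟨v, hv⟩ := hu'
  have hvu : qnum p x * (↑v⁻¹ : R p) = 1 := by
    rw [← hv, ← Units.val_mul, mul_inv_cancel, Units.val_one]
  refine ⟨(↑v⁻¹ : R p) * qpow p x * w, ?_⟩
  rw [qnum_add, qnum_natCast, hw]
  linear_combination (-(qnat p (p ^ (s' + 1)) * qpow p x * w)) * hvu

lemma key_split (θ θ' : ℤ_[p]) (a₀ : ℕ) (hθ' : (p : ℤ_[p]) * θ' - θ = (a₀ : ℤ_[p]))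
    (t A B : ℕ) (hsub : ∀ ν' < B, a₀ + p * ν' < A) :
    ∏ ν ∈ Finset.range A, qnum p (θ + ((t * p : ℕ) : ℤ_[p]) + (ν : ℤ_[p]))
      = (∏ ν ∈ Finset.range A \ ((Finset.range B).image fun ν' => a₀ + p * ν'),
          qnum p (θ + ((t * p : ℕ) : ℤ_[p]) + (ν : ℤ_[p])))
        * ((qnat p p) ^ B
        * ∏ ν' ∈ Finset.range B, phiR p (qnum p (θ' + (t : ℤ_[p]) + (ν' : ℤ_[p])))) := by
  have hp1 : 0 < p := Nat.Prime.pos Fact.out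
  set S₁ : Finset ℕ := (Finset.range B).image fun ν' => a₀ + p * ν' with hS₁
  have hsubset : S₁ ⊆ Finset.range A := by
    intro ν hν
    rw [hS₁, Finset.mem_image] at hν
    obtain ⟨ν', hν', rfl⟩ := hν
    exact Finset.mem_range.mpr (hsub ν' (Finset.mem_range.mp hν'))
  rw [← Finset.prod_sdiff hsubset]
  congr 1
  rw [hS₁, Finset.prod_image (by
    intro x _ y _ h
    exact Nat.eq_of_mul_eq_mul_left hp1 (Nat.add_left_cancel h))]
  have hpoint : ∀ ν' ∈ Finset.range B,
      qnum p (θ + ((t * p : ℕ) : ℤ_[p]) + ((a₀ + p * ν' : ℕ) : ℤ_[p]))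
        = qnat p p * phiR p (qnum p (θ' + (t : ℤ_[p]) + (ν' : ℤ_[p]))) := by
    intro ν' _
    rw [← qnum_p_mul]
    have harg : θ + ((t * p : ℕ) : ℤ_[p]) + ((a₀ + p * ν' : ℕ) : ℤ_[p])
        = (p : ℤ_[p]) * (θ' + (t : ℤ_[p]) + (ν' : ℤ_[p])) := by
      push_cast
      linear_combination (-1 : ℤ_[p]) * hθ'
    rw [harg]
  rw [Finset.prod_congr rfl hpoint, Finset.prod_mul_distrib, Finset.prod_const,
    Finset.card_range]
lemma prod_factor (c : R p) (S : Finset ℕ) (f g : ℕ → R p)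
    (h : ∀ ν ∈ S, ∃ r, f ν = g ν * (1 + c * r)) :
    ∃ r, ∏ ν ∈ S, f ν = (∏ ν ∈ S, g ν) * (1 + c * r) := by
  classical
  induction S using Finset.induction with
  | empty => exact ⟨0, by simp⟩
  | @insert x S hx ih =>
      obtain ⟨r1, hr1⟩ := h _ (Finset.mem_insert_self _ _)
      obtain ⟨r2, hr2⟩ := ih (fun ν hν => h ν (Finset.mem_insert_of_mem hν))
      rw [Finset.prod_insert hx, Finset.prod_insert hx, hr1, hr2]
      exact ⟨r1 + r2 + c * r1 * r2, by ring⟩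

lemma phiR_prod (S : Finset ℕ) (f : ℕ → R p) :
    phiR p (∏ ν ∈ S, f ν) = ∏ ν ∈ S, phiR p (f ν) := by
  rw [← phiHom_apply, map_prod]
  exact Finset.prod_congr rfl fun ν _ => rfl

set_option maxHeartbeats 2000000 in
theorem dwork_aux (θ θ' : ℤ_[p]) (hθ : ∀ n : ℕ, θ + (n : ℤ_[p]) ≠ 0)
    (a₀ : ℕ) (ha₀' : a₀ < p) (hθ' : (p : ℤ_[p]) * θ' - θ = (a₀ : ℤ_[p]))
    (μ s : ℕ) (hμ : 0 < μ) (m a : ℕ) (ha' : a < p) (ρ : ℕ)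
    (hρ : (a₀ < a ∧ ρ = 1) ∨ (a ≤ a₀ ∧ ρ = 0)) :
    ∃ u r : R p, u = 1 + qnat p (p ^ (s + 1)) * r ∧
      ι p (Cq p θ (a + μ * p + m * p ^ (s + 1))) / ι p (phiR p (Cq p θ' (μ + m * p ^ s))) =
        ι p u * (ι p (Cq p θ (m * p ^ (s + 1))) / ι p (phiR p (Cq p θ' (m * p ^ s)))) *
          (ι p (Cq p θ (a + μ * p)) / ι p (phiR p (Cq p θ' μ))) *
          (ι p (phiR p (qnum p (θ' + ((m * p ^ s : ℕ) : ℤ_[p]) + (μ : ℤ_[p])))) /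
            ι p (phiR p (qnum p (θ' + (μ : ℤ_[p]))))) ^ ρ := by
  classical
  have hprime : p.Prime := Fact.out
  have hp1 : 0 < p := hprime.pos
  -- θ' shifts are nonzero
  have hθn' : ∀ n : ℕ, θ' + (n : ℤ_[p]) ≠ 0 := by
    intro n h
    have hpz : (p : ℤ_[p]) * (θ' + (n : ℤ_[p])) = θ + ((a₀ + p * n : ℕ) : ℤ_[p]) := by
      push_cast
      linear_combination hθ'
    exact hθ (a₀ + p * n) (by rw [← hpz, h, mul_zero])
  -- image bound
  have hsub : ∀ ν' < μ + ρ, a₀ + p * ν' < a + μ * p := by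
    intro ν' hν'
    rcases hρ with ⟨hlt, hρ1⟩ | ⟨hle, hρ0⟩
    · have h1 : ν' ≤ μ := by omega
      have h2 : p * ν' ≤ p * μ := Nat.mul_le_mul_left p h1
      have h3 : μ * p = p * μ := Nat.mul_comm μ p
      linarith
    · have h1 : ν' + 1 ≤ μ := by omega
      have h2 : p * (ν' + 1) ≤ p * μ := Nat.mul_le_mul_left p h1
      have h3 : μ * p = p * μ := Nat.mul_comm μ p
      have h4 : p * (ν' + 1) = p * ν' + p := by ring
      linarith
  -- membership
  have hmem : ∀ ν k : ℕ, ν < a + μ * p → ν = a₀ + p * k →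
      ν ∈ (Finset.range (μ + ρ)).image (fun ν' => a₀ + p * ν') := by
    intro ν k hν hk
    refine Finset.mem_image.mpr ⟨k, Finset.mem_range.mpr ?_, hk.symm⟩
    by_contra hcon
    push_neg at hcon
    have h2 : p * (μ + ρ) ≤ p * k := Nat.mul_le_mul_left p hcon
    have h3 : μ * p = p * μ := Nat.mul_comm μ p
    rcases hρ with ⟨hlt, hρ1⟩ | ⟨hle, hρ0⟩
    · rw [hρ1] at h2
      have h4 : p * (μ + 1) = p * μ + p := by ring
      linarith
    · rw [hρ0] at h2
      have h4 : p * (μ + 0) = p * μ := by ring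
      linarith
  -- units on S₀
  have hS₀unit : ∀ ν ∈ Finset.range (a + μ * p) \
      ((Finset.range (μ + ρ)).image (fun ν' => a₀ + p * ν')), IsUnit (θ + (ν : ℤ_[p])) := by
    intro ν hν
    rw [Finset.mem_sdiff, Finset.mem_range] at hν
    obtain ⟨hνA, hνS₁⟩ := hν
    rw [PadicInt.isUnit_iff]
    by_contra hnorm
    have hlt1 : ‖θ + (ν : ℤ_[p])‖ < 1 :=
      lt_of_le_of_ne (PadicInt.norm_le_one _) hnorm
    have hdvd : (p : ℤ_[p]) ∣ θ + (ν : ℤ_[p]) := (PadicInt.norm_lt_one_iff_dvd _).mp hlt1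
    have heq : θ + (ν : ℤ_[p]) = (p : ℤ_[p]) * θ' + (((ν : ℤ) - (a₀ : ℤ) : ℤ) : ℤ_[p]) := by
      push_cast
      linear_combination - hθ'
    have hdvd2 : (p : ℤ_[p]) ∣ (((ν : ℤ) - (a₀ : ℤ) : ℤ) : ℤ_[p]) := by
      have := dvd_sub hdvd (Dvd.intro θ' rfl)
      rw [heq] at this
      simpa using this
    have hdvd3 : (p : ℤ) ∣ (ν : ℤ) - (a₀ : ℤ) :=
      (PadicInt.norm_int_lt_one_iff_dvd _).mp ((PadicInt.norm_lt_one_iff_dvd _).mpr hdvd2)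
    obtain ⟨k, hk⟩ := hdvd3
    have hk0 : 0 ≤ k := by
      by_contra hneg
      push_neg at hneg
      have h1 : k ≤ -1 := by omega
      have h2 : (p : ℤ) * k ≤ (p : ℤ) * (-1) :=
        mul_le_mul_of_nonneg_left h1 (by positivity)
      have h3 : (0 : ℤ) ≤ (ν : ℤ) := Int.natCast_nonneg ν
      have h4 : (a₀ : ℤ) < (p : ℤ) := by exact_mod_cast ha₀'
      linarith
    lift k to ℕ using hk0 with k'
    have hνk : ν = a₀ + p * k' := by
      have h5 : (ν : ℤ) = (a₀ : ℤ) + (p : ℤ) * (k' : ℤ) := by linarith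
      exact_mod_cast h5
    exact hνS₁ (hmem ν k' hνA hνk)
  -- numerator splits
  have hsplitL : Cq p θ (a + μ * p + m * p ^ (s + 1)) = Cq p θ (m * p ^ (s + 1)) *
      ∏ ν ∈ Finset.range (a + μ * p),
        qnum p (θ + ((m * p ^ s * p : ℕ) : ℤ_[p]) + (ν : ℤ_[p])) := by
    have hTA : a + μ * p + m * p ^ (s + 1) = m * p ^ (s + 1) + (a + μ * p) := by ring
    rw [Cq, hTA, Finset.prod_range_add]
    congr 1
    refine Finset.prod_congr rfl fun ν _ => ?_
    congr 1
    push_cast [pow_succ]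
    ring
  have hsplitL2 := key_split p θ θ' a₀ hθ' (m * p ^ s) (a + μ * p) (μ + ρ) hsub
  have hsplit0 : (∏ ν ∈ Finset.range (a + μ * p), qnum p (θ + (ν : ℤ_[p]))) =
      (∏ ν ∈ Finset.range (a + μ * p) \
          ((Finset.range (μ + ρ)).image (fun ν' => a₀ + p * ν')), qnum p (θ + (ν : ℤ_[p])))
        * ((qnat p p) ^ (μ + ρ)
          * ∏ ν' ∈ Finset.range (μ + ρ), phiR p (qnum p (θ' + (ν' : ℤ_[p])))) := by
    have h0 := key_split p θ θ' a₀ hθ' 0 (a + μ * p) (μ + ρ) hsub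
    have e1 : ∀ ν : ℕ, θ + ((0 * p : ℕ) : ℤ_[p]) + (ν : ℤ_[p]) = θ + (ν : ℤ_[p]) := by
      intro ν; push_cast; ring
    have e2 : ∀ ν' : ℕ, θ' + ((0 : ℕ) : ℤ_[p]) + (ν' : ℤ_[p]) = θ' + (ν' : ℤ_[p]) := by
      intro ν'; push_cast; ring
    simp only [e1, e2] at h0
    exact h0
  -- unit product factorization
  have hfac : ∀ ν ∈ Finset.range (a + μ * p) \
      ((Finset.range (μ + ρ)).image (fun ν' => a₀ + p * ν')),
      ∃ r, qnum p (θ + ((m * p ^ s * p : ℕ) : ℤ_[p]) + (ν : ℤ_[p]))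
        = qnum p (θ + (ν : ℤ_[p])) * (1 + qnat p (p ^ (s + 1)) * r) := by
    intro ν hν
    obtain ⟨r, hr⟩ := qnum_shift_unit p (θ + (ν : ℤ_[p])) (hS₀unit ν hν) s m
    refine ⟨r, ?_⟩
    rw [← hr]
    congr 1
    push_cast [pow_succ]
    ring
  obtain ⟨r, hr⟩ := prod_factor p (qnat p (p ^ (s + 1))) _ _ _ hfac
  refine ⟨1 + qnat p (p ^ (s + 1)) * r, r, rfl, ?_⟩
  -- split off last factor of range (μ+ρ) products
  have hBsplit : ∀ g : ℕ → R p, ∏ ν' ∈ Finset.range (μ + ρ), g ν'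
      = (∏ ν' ∈ Finset.range μ, g ν') * (g μ) ^ ρ := by
    intro g
    rcases hρ with ⟨_, hρ1⟩ | ⟨_, hρ0⟩
    · rw [hρ1, Finset.prod_range_succ, pow_one]
    · rw [hρ0, Nat.add_zero, pow_zero, mul_one]
  -- denominator split
  have hden : phiR p (Cq p θ' (μ + m * p ^ s)) = phiR p (Cq p θ' (m * p ^ s)) *
      ∏ ν' ∈ Finset.range μ,
        phiR p (qnum p (θ' + ((m * p ^ s : ℕ) : ℤ_[p]) + (ν' : ℤ_[p]))) := by
    have hden0 : Cq p θ' (μ + m * p ^ s) = Cq p θ' (m * p ^ s) *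
        ∏ ν' ∈ Finset.range μ,
          qnum p (θ' + ((m * p ^ s : ℕ) : ℤ_[p]) + (ν' : ℤ_[p])) := by
      have h1 : μ + m * p ^ s = m * p ^ s + μ := Nat.add_comm _ _
      rw [Cq, h1, Finset.prod_range_add]
      congr 1
      refine Finset.prod_congr rfl fun ν' _ => ?_
      congr 1
      push_cast
      ring
    rw [hden0, ← phiHom_apply, map_mul, phiHom_apply, phiHom_apply, phiR_prod]
  -- express Cq θ' μ as the μ-range product of phiR factors
  have hphiD3 : ∏ ν' ∈ Finset.range μ, phiR p (qnum p (θ' + (ν' : ℤ_[p])))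
      = phiR p (Cq p θ' μ) := by
    rw [Cq, phiR_prod]
  -- D3 split for Cq θ (a + μ p)
  have hD3split : Cq p θ (a + μ * p) = (∏ ν ∈ Finset.range (a + μ * p) \
        ((Finset.range (μ + ρ)).image (fun ν' => a₀ + p * ν')), qnum p (θ + (ν : ℤ_[p])))
      * ((qnat p p) ^ (μ + ρ) * (phiR p (Cq p θ' μ)
        * (phiR p (qnum p (θ' + (μ : ℤ_[p])))) ^ ρ)) := by
    rw [Cq, hsplit0, hBsplit, hphiD3]
  -- nonvanishing
  have hC2 : ι p (phiR p (Cq p θ' (m * p ^ s))) ≠ 0 :=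
    iota_ne_zero p (phiR_ne_zero p (Cq_ne_zero p θ' hθn' _))
  have hC3 : ι p (phiR p (Cq p θ' μ)) ≠ 0 :=
    iota_ne_zero p (phiR_ne_zero p (Cq_ne_zero p θ' hθn' _))
  have hGm : ∀ ν' : ℕ, qnum p (θ' + ((m * p ^ s : ℕ) : ℤ_[p]) + (ν' : ℤ_[p])) ≠ 0 := by
    intro ν'
    have harg : θ' + ((m * p ^ s : ℕ) : ℤ_[p]) + (ν' : ℤ_[p])
        = θ' + ((m * p ^ s + ν' : ℕ) : ℤ_[p]) := by push_cast; ring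
    rw [harg]
    exact qnum_ne_zero p (hθn' _)
  have hDt : ι p (∏ ν' ∈ Finset.range μ,
      phiR p (qnum p (θ' + ((m * p ^ s : ℕ) : ℤ_[p]) + (ν' : ℤ_[p])))) ≠ 0 := by
    apply iota_ne_zero
    rw [Finset.prod_ne_zero_iff]
    exact fun ν' _ => phiR_ne_zero p (hGm ν')
  have hE2 : ι p (phiR p (qnum p (θ' + (μ : ℤ_[p])))) ≠ 0 :=
    iota_ne_zero p (phiR_ne_zero p (qnum_ne_zero p (hθn' μ)))
  have hE2pow : (ι p (phiR p (qnum p (θ' + (μ : ℤ_[p]))))) ^ ρ ≠ 0 := pow_ne_zero _ hE2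
  -- assemble
  rw [hsplitL, hsplitL2, hBsplit, hr, hden, hD3split]
  simp only [map_mul, map_pow]
  rw [div_eq_iff (mul_ne_zero hC2 hDt)]
  field_simp [hC2, hC3, hE2, hE2pow]
  rw [div_pow, mul_assoc _ (_ ^ ρ) (_ / _), mul_div_cancel₀ _ hE2pow]


/-- Dwork's Lemma 1, congruence (1,1), q-analogue. Here `θ ∈ ℤ_p` is neither zero nor a
negative integer, `θ' ∈ ℤ_p` is the unique element with `pθ'−θ = a₀` an integer in `[0,p−1]`,
`μ, s > 0`, `m ≥ 0`, `0 ≤ a ≤ p−1`, and the exponent is `ρ(a+θ−pθ') = ρ(a−a₀)`. -/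
theorem dwork_congruence_1_1 (hp : p ≠ 2) (θ θ' : ℤ_[p])
    (hθ : ∀ n : ℕ, θ + (n : ℤ_[p]) ≠ 0)
    (a₀ : ℕ) (ha₀ : a₀ ≤ p - 1) (hθ' : (p : ℤ_[p]) * θ' - θ = (a₀ : ℤ_[p]))
    (μ s : ℕ) (hμ : 0 < μ) (hs : 0 < s) (m a : ℕ) (ha : a ≤ p - 1) :
    ∃ u r : R p, u = 1 + qnat p (p ^ (s + 1)) * r ∧
      ι p (Cq p θ (a + μ * p + m * p ^ (s + 1))) / ι p (phiR p (Cq p θ' (μ + m * p ^ s))) =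
        ι p u * (ι p (Cq p θ (m * p ^ (s + 1))) / ι p (phiR p (Cq p θ' (m * p ^ s)))) *
          (ι p (Cq p θ (a + μ * p)) / ι p (phiR p (Cq p θ' μ))) *
          phiQ p (1 + ι p (qpow p (θ' + (μ : ℤ_[p]))) * qnatQ p (m * p ^ s) /
              qnumQ p (θ' + (μ : ℤ_[p]))) ^
            (if 0 < (a : ℤ) - (a₀ : ℤ) then 1 else 0) := by
  have hprime : p.Prime := Fact.out
  have hp2 : 2 ≤ p := hprime.two_le
  have ha' : a < p := by omega
  have ha₀' : a₀ < p := by omega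
  -- θ' shifts are nonzero (needed for the E-term rewriting)
  have hθn' : ∀ n : ℕ, θ' + (n : ℤ_[p]) ≠ 0 := by
    intro n h
    have hpz : (p : ℤ_[p]) * (θ' + (n : ℤ_[p])) = θ + ((a₀ + p * n : ℕ) : ℤ_[p]) := by
      push_cast
      linear_combination hθ'
    exact hθ (a₀ + p * n) (by rw [← hpz, h, mul_zero])
  have hqnumμ : qnum p (θ' + (μ : ℤ_[p])) ≠ 0 := qnum_ne_zero p (hθn' μ)
  have hEid : qnum p (θ' + ((m * p ^ s : ℕ) : ℤ_[p]) + (μ : ℤ_[p]))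
      = qnum p (θ' + (μ : ℤ_[p])) + qpow p (θ' + (μ : ℤ_[p])) * qnat p (m * p ^ s) := by
    have h1 : θ' + ((m * p ^ s : ℕ) : ℤ_[p]) + (μ : ℤ_[p])
        = (θ' + (μ : ℤ_[p])) + ((m * p ^ s : ℕ) : ℤ_[p]) := by ring
    rw [h1, qnum_add, qnum_natCast]
  have hE : phiQ p (1 + ι p (qpow p (θ' + (μ : ℤ_[p]))) * qnatQ p (m * p ^ s) /
        qnumQ p (θ' + (μ : ℤ_[p])))
      = ι p (phiR p (qnum p (θ' + ((m * p ^ s : ℕ) : ℤ_[p]) + (μ : ℤ_[p]))))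
        / ι p (phiR p (qnum p (θ' + (μ : ℤ_[p])))) := by
    have hι : ι p (qnum p (θ' + (μ : ℤ_[p]))) ≠ 0 := iota_ne_zero p hqnumμ
    have h1 : (1 : Q p) + ι p (qpow p (θ' + (μ : ℤ_[p]))) * qnatQ p (m * p ^ s) /
          qnumQ p (θ' + (μ : ℤ_[p]))
        = ι p (qnum p (θ' + ((m * p ^ s : ℕ) : ℤ_[p]) + (μ : ℤ_[p])))
          / ι p (qnum p (θ' + (μ : ℤ_[p]))) := by
      rw [qnatQ, qnumQ, hEid, map_add, map_mul]
      field_simp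
    rw [h1, phiQ_div p _ _ hqnumμ]
  rw [hE]
  exact dwork_aux p θ θ' hθ a₀ ha₀' hθ' μ s hμ m a ha'
    (if 0 < (a : ℤ) - (a₀ : ℤ) then 1 else 0)
    (by split_ifs with h
        · exact Or.inl ⟨by omega, rfl⟩
        · exact Or.inr ⟨by omega, rfl⟩)



end QDwork
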